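/- If a conditional indicator I is regular and H-positively-homogeneous, then for all X in its domain and all real-valued H-measurable h, I(hX) = h⁺·I(X) + h⁻·I(−X) a.s. -/

import Mathlib

open MeasureTheory Filter Set
open scoped ENNReal Classical

noncomputable section

variable {Ω : Type*}

/-- `S` is the conditional essential supremum of the family `Γ` of extended-real-valued
random variables, given the sub-σ-algebra `m`: `S` is `m`-measurable, a.e. dominates every
member of `Γ`, and is minimal among `m`-measurable a.e. dominants. -/
def IsCondSup {F : MeasurableSpace Ω} (μ : Measure Ω) (m : MeasurableSpace Ω)
    (Γ : Set (Ω → EReal)) (S : Ω → EReal) : Prop :=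
  Measurable[m] S ∧ (∀ Y ∈ Γ, ∀ᵐ ω ∂μ, Y ω ≤ S ω) ∧
    ∀ T : Ω → EReal, Measurable[m] T → (∀ Y ∈ Γ, ∀ᵐ ω ∂μ, Y ω ≤ T ω) →
      ∀ᵐ ω ∂μ, S ω ≤ T ω

/-- `S` is the conditional essential infimum of the family `Γ` given `m`. -/
def IsCondInf {F : MeasurableSpace Ω} (μ : Measure Ω) (m : MeasurableSpace Ω)
    (Γ : Set (Ω → EReal)) (S : Ω → EReal) : Prop :=
  Measurable[m] S ∧ (∀ Y ∈ Γ, ∀ᵐ ω ∂μ, S ω ≤ Y ω) ∧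
    ∀ T : Ω → EReal, Measurable[m] T → (∀ Y ∈ Γ, ∀ᵐ ω ∂μ, T ω ≤ Y ω) →
      ∀ᵐ ω ∂μ, T ω ≤ S ω

/-- If a conditional indicator `I` is regular and `H`-positively-homogeneous,
then for all `X` in its domain and all real-valued `H`-measurable `h`,
`I(hX) = h⁺·I(X) + h⁻·I(−X)` a.e. -/
theorem conditional_indicator_signed_homogeneous
    {F : MeasurableSpace Ω} (μ : Measure Ω) (H : MeasurableSpace Ω) (hH : H ≤ F)
    (D : Set (Ω → EReal)) (h0D : (0 : Ω → EReal) ∈ D)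
    (hDstable : ∀ X ∈ D, ∀ Z : Ω → EReal, Measurable[H] Z → X + Z ∈ D)
    (hdec : ∀ A : Set Ω, MeasurableSet[H] A → ∀ X ∈ D, ∀ Y ∈ D,
      (fun ω => if ω ∈ A then X ω else Y ω) ∈ D)
    (hnegD : ∀ X ∈ D, (fun ω => -X ω) ∈ D)
    (I : (Ω → EReal) → Ω → EReal)
    (hmeasI : ∀ X ∈ D, Measurable[H] (I X))
    (hbdd : ∀ X ∈ D, ∃ einf esup : Ω → EReal,
      IsCondInf μ H {X} einf ∧ IsCondSup μ H {X} esup ∧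
        ∀ᵐ ω ∂μ, einf ω ≤ I X ω ∧ I X ω ≤ esup ω)
    (hreg : ∀ X ∈ D, ∀ A : Set Ω, MeasurableSet[H] A →
      I (A.indicator X) =ᵐ[μ] A.indicator (I X))
    (hposhom : ∀ α : Ω → ℝ, Measurable[H] α → (∀ ω, 0 ≤ α ω) → ∀ X ∈ D,
      (fun ω => (α ω : EReal) * X ω) ∈ D ∧
        I (fun ω => (α ω : EReal) * X ω) =ᵐ[μ] fun ω => (α ω : EReal) * I X ω)
    (X : Ω → EReal) (hX : X ∈ D)
    (h : Ω → ℝ) (hh : Measurable[H] h)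
    (hhX : (fun ω => (h ω : EReal) * X ω) ∈ D) :
    I (fun ω => (h ω : EReal) * X ω) =ᵐ[μ]
      fun ω => ((max (h ω) 0 : ℝ) : EReal) * I X ω +
        ((max (-h ω) 0 : ℝ) : EReal) * I (fun ω' => -X ω') ω := by
  classical
  set A : Set Ω := {ω | 0 ≤ h ω} with hAdef
  have hA : MeasurableSet[H] A := measurableSet_le measurable_const hh
  set α : Ω → ℝ := fun ω => max (h ω) 0 with hαdef
  set β : Ω → ℝ := fun ω => max (-h ω) 0 with hβdef
  have hαm : Measurable[H] α := hh.max measurable_const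
  have hβm : Measurable[H] β := hh.neg.max measurable_const
  have hα0 : ∀ ω, 0 ≤ α ω := fun ω => le_max_right _ _
  have hβ0 : ∀ ω, 0 ≤ β ω := fun ω => le_max_right _ _
  obtain ⟨hfD, hf⟩ := hposhom α hαm hα0 X hX
  obtain ⟨hgD, hg⟩ := hposhom β hβm hβ0 (fun ω => -X ω) (hnegD X hX)
  have key1 : A.indicator (fun ω => (h ω : EReal) * X ω)
      = fun ω => (α ω : EReal) * X ω := by
    funext ω
    by_cases hω : ω ∈ A
    · have : α ω = h ω := max_eq_left hω
      simp [Set.indicator_of_mem hω, this]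
    · have : α ω = 0 := max_eq_right (le_of_lt (not_le.mp hω))
      simp [Set.indicator_of_notMem hω, this]
  have key2 : Aᶜ.indicator (fun ω => (h ω : EReal) * X ω)
      = fun ω => (β ω : EReal) * (-X ω) := by
    funext ω
    by_cases hω : ω ∈ A
    · have : β ω = 0 := max_eq_right (neg_nonpos.mpr hω)
      simp [Set.indicator_of_notMem (by simpa using hω : ω ∉ Aᶜ), this]
    · have hβω : β ω = -h ω := max_eq_left (le_of_lt (by simpa using not_le.mp hω))
      have : ((β ω : ℝ) : EReal) * (-X ω) = (h ω : EReal) * X ω := by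
        rw [hβω]
        push_cast
        rw [neg_mul_neg]
      simp [Set.indicator_of_mem (by simpa using hω : ω ∈ Aᶜ), this]
  have eq1 : A.indicator (I (fun ω => (h ω : EReal) * X ω))
      =ᵐ[μ] fun ω => (α ω : EReal) * I X ω := by
    have := (hreg _ hhX A hA).symm
    rw [key1] at this
    exact this.trans hf
  have eq2 : Aᶜ.indicator (I (fun ω => (h ω : EReal) * X ω))
      =ᵐ[μ] fun ω => (β ω : EReal) * I (fun ω' => -X ω') ω := by
    have := (hreg _ hhX Aᶜ hA.compl).symm
    rw [key2] at this
    exact this.trans hg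
  filter_upwards [eq1, eq2] with ω h1 h2
  by_cases hω : ω ∈ A
  · have hi1 : I (fun ω => (h ω : EReal) * X ω) ω = (α ω : EReal) * I X ω := by
      rw [← h1, Set.indicator_of_mem hω]
    have hi2 : (0 : EReal) = (β ω : EReal) * I (fun ω' => -X ω') ω := by
      rw [← h2, Set.indicator_of_notMem (by simpa using hω : ω ∉ Aᶜ)]
    show I (fun ω => (h ω : EReal) * X ω) ω = (α ω : EReal) * I X ω + (β ω : EReal) * I (fun ω' => -X ω') ω
    simp only [hi1, ← hi2, add_zero]
  · have hi1 : (0 : EReal) = (α ω : EReal) * I X ω := by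
      rw [← h1, Set.indicator_of_notMem hω]
    have hi2 : I (fun ω => (h ω : EReal) * X ω) ω
        = (β ω : EReal) * I (fun ω' => -X ω') ω := by
      rw [← h2, Set.indicator_of_mem (by simpa using hω : ω ∈ Aᶜ)]
    show I (fun ω => (h ω : EReal) * X ω) ω = (α ω : EReal) * I X ω + (β ω : EReal) * I (fun ω' => -X ω') ω
    simp only [hi2, ← hi1, zero_add]
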